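/- Let λ(n, b_1, b_2) denote the number of ways to select b_1 1-arcs and b_2 2-arcs over {1,…,n} such that all selected arcs are pairwise vertex-disjoint. Then λ satisfies the recursion λ(n, b_1, b_2) = λ(n-2, b_1-1, b_2) + λ(n-1, b_1, b_2) + λ(n-4, b_1, b_2-2) + λ(n-3, b_1, b_2-1) for n ≥ 5, b_1 ≥ 1, b_2 ≥ 2, with the convention that λ vanishes when any argument is negative, and with initial conditions λ(n, 0, 0) = 1 and λ(n, b_1, 0) = C(n-b_1, b_1), where C(·,·) is the binomial coefficient. -/

import Mathlib

/-- A set of arcs (ordered pairs of vertices) is pairwise vertex-disjoint. -/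
def ArcsDisjoint (M : Finset (ℕ × ℕ)) : Prop :=
  ∀ p ∈ M, ∀ q ∈ M, p ≠ q → p.1 ≠ q.1 ∧ p.1 ≠ q.2 ∧ p.2 ≠ q.1 ∧ p.2 ≠ q.2

/-- `M` is a partial matching on `{1,…,n}`: arcs `(i,j)` with `1 ≤ i < j ≤ n`,
every vertex in at most one arc. -/
def IsPartialMatching (n : ℕ) (M : Finset (ℕ × ℕ)) : Prop :=
  (∀ p ∈ M, 1 ≤ p.1 ∧ p.1 < p.2 ∧ p.2 ≤ n) ∧ ArcsDisjoint M

/-- `M` contains `k` mutually crossing arcs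
`(i₁,j₁),…,(i_k,j_k)` with `i₁ < ⋯ < i_k < j₁ < ⋯ < j_k`. -/
def HasKCrossing (k : ℕ) (M : Finset (ℕ × ℕ)) : Prop :=
  ∃ f : Fin k → ℕ × ℕ, (∀ r, f r ∈ M) ∧
    (StrictMono fun r => (f r).1) ∧ (StrictMono fun r => (f r).2) ∧
    ∀ r s : Fin k, (f r).1 < (f s).2

/-- `M` is `k`-noncrossing. -/
def KNoncrossing (k : ℕ) (M : Finset (ℕ × ℕ)) : Prop := ¬ HasKCrossing k M

/-- The number of isolated vertices of `M` in `{1,…,n}`. -/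
def isolatedCount (n : ℕ) (M : Finset (ℕ × ℕ)) : ℕ :=
  ((Finset.Icc 1 n).filter fun v => ∀ p ∈ M, p.1 ≠ v ∧ p.2 ≠ v).card

/-- `fMatch k n ℓ`: the number of `k`-noncrossing partial matchings on `{1,…,n}`
with exactly `ℓ` isolated vertices. -/
noncomputable def fMatch (k n ℓ : ℕ) : ℕ :=
  Nat.card {M : Finset (ℕ × ℕ) //
    IsPartialMatching n M ∧ KNoncrossing k M ∧ isolatedCount n M = ℓ}

/-- `p` is a 1-arc over `{1,…,n}`, i.e. `p = (i, i+1)` with `1 ≤ i ≤ n-1`. -/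
def IsOneArc (n : ℕ) (p : ℕ × ℕ) : Prop :=
  1 ≤ p.1 ∧ p.1 + 1 ≤ n ∧ p.2 = p.1 + 1

/-- `p` is a 2-arc over `{1,…,n}`, i.e. `p = (i, i+2)` with `1 ≤ i ≤ n-2`. -/
def IsTwoArc (n : ℕ) (p : ℕ × ℕ) : Prop :=
  1 ≤ p.1 ∧ p.1 + 2 ≤ n ∧ p.2 = p.1 + 2

/-- `λ(n, b₁, b₂)`: the number of ways to select `b₁` 1-arcs and `b₂` 2-arcs
over `{1,…,n}` such that all selected arcs are pairwise vertex-disjoint. -/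
noncomputable def lamSel (n b₁ b₂ : ℕ) : ℕ :=
  Nat.card {A : Finset (ℕ × ℕ) //
    (∀ p ∈ A, IsOneArc n p ∨ IsTwoArc n p) ∧ ArcsDisjoint A ∧
    (A.filter fun p => p.2 = p.1 + 1).card = b₁ ∧
    (A.filter fun p => p.2 = p.1 + 2).card = b₂}


section AuxLamSel

open Finset

/-- helper: pair inequality from component facts. -/
lemma pair_ne {a b c d : ℕ} (h : ¬(a = c ∧ b = d)) : (a, b) ≠ (c, d) := by
  intro he; rw [Prod.mk.injEq] at he; exact h he

lemma arc_bounds {n : ℕ} {p : ℕ × ℕ} (h : IsOneArc n p ∨ IsTwoArc n p) :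
    1 ≤ p.1 ∧ p.1 < p.2 ∧ p.2 ≤ n ∧ (p.2 = p.1 + 1 ∨ p.2 = p.1 + 2) := by
  rcases h with ⟨h1, h2, h3⟩ | ⟨h1, h2, h3⟩ <;> omega

lemma arc_up {m n : ℕ} (hmn : m ≤ n) {p : ℕ × ℕ} (h : IsOneArc m p ∨ IsTwoArc m p) :
    IsOneArc n p ∨ IsTwoArc n p := by
  rcases h with ⟨h1, h2, h3⟩ | ⟨h1, h2, h3⟩
  · exact Or.inl ⟨h1, h2.trans hmn, h3⟩
  · exact Or.inr ⟨h1, h2.trans hmn, h3⟩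

lemma arc_down {m n : ℕ} {p : ℕ × ℕ} (h : IsOneArc n p ∨ IsTwoArc n p) (hm : p.2 ≤ m) :
    IsOneArc m p ∨ IsTwoArc m p := by
  rcases h with ⟨h1, h2, h3⟩ | ⟨h1, h2, h3⟩
  · exact Or.inl ⟨h1, by omega, h3⟩
  · exact Or.inr ⟨h1, by omega, h3⟩

lemma ArcsDisjoint.mono {A B : Finset (ℕ × ℕ)} (h : A ⊆ B) (hB : ArcsDisjoint B) :
    ArcsDisjoint A := fun p hp q hq hpq => hB p (h hp) q (h hq) hpq

lemma arcsDisjoint_insert {A : Finset (ℕ × ℕ)} {a : ℕ × ℕ} (hA : ArcsDisjoint A)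
    (h : ∀ p ∈ A, p.1 ≠ a.1 ∧ p.1 ≠ a.2 ∧ p.2 ≠ a.1 ∧ p.2 ≠ a.2) :
    ArcsDisjoint (insert a A) := by
  intro p hp q hq hne
  rcases Finset.mem_insert.mp hp with rfl | hp' <;>
    rcases Finset.mem_insert.mp hq with rfl | hq'
  · exact absurd rfl hne
  · obtain ⟨h1, h2, h3, h4⟩ := h q hq'
    exact ⟨h1.symm, h3.symm, h2.symm, h4.symm⟩
  · exact h p hp'
  · exact hA p hp' q hq' hne

/-- the predicate defining `lamSel`. -/
def lamP (n b₁ b₂ : ℕ) (A : Finset (ℕ × ℕ)) : Prop :=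
  (∀ p ∈ A, IsOneArc n p ∨ IsTwoArc n p) ∧ ArcsDisjoint A ∧
    (A.filter fun p => p.2 = p.1 + 1).card = b₁ ∧
    (A.filter fun p => p.2 = p.1 + 2).card = b₂

open scoped Classical in
/-- the finite set of selections counted by `lamSel`. -/
noncomputable def selSet (n b₁ b₂ : ℕ) : Finset (Finset (ℕ × ℕ)) :=
  ((Finset.Icc 1 n ×ˢ Finset.Icc 1 n).powerset).filter (lamP n b₁ b₂)

lemma mem_selSet {n b₁ b₂ : ℕ} {A : Finset (ℕ × ℕ)} :
    A ∈ selSet n b₁ b₂ ↔ lamP n b₁ b₂ A := by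
  classical
  unfold selSet
  rw [Finset.mem_filter, Finset.mem_powerset, and_iff_right_iff_imp]
  intro hP p hp
  obtain ⟨h1, h2, h3, _⟩ := arc_bounds (hP.1 p hp)
  rw [Finset.mem_product, Finset.mem_Icc, Finset.mem_Icc]
  omega

lemma lamSel_eq (n b₁ b₂ : ℕ) : lamSel n b₁ b₂ = (selSet n b₁ b₂).card := by
  rw [lamSel, ← Nat.card_eq_finsetCard]
  exact Nat.card_congr (Equiv.subtypeEquivRight fun A => Iff.symm mem_selSet)

lemma snd_le {n b₁ b₂ : ℕ} {A : Finset (ℕ × ℕ)} (hA : lamP n b₁ b₂ A) :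
    ∀ p ∈ A, 1 ≤ p.1 ∧ p.1 < p.2 ∧ p.2 ≤ n := by
  intro p hp
  obtain ⟨h1, h2, h3, _⟩ := arc_bounds (hA.1 p hp)
  exact ⟨h1, h2, h3⟩

end AuxLamSel

section AuxLamSel2

open Finset
open scoped Classical

lemma isOneArc_mk {n i j : ℕ} (h1 : 1 ≤ i) (hj : j = i + 1) (h2 : j ≤ n) :
    IsOneArc n (i, j) := ⟨h1, by omega, hj⟩

lemma isTwoArc_mk {n i j : ℕ} (h1 : 1 ≤ i) (hj : j = i + 2) (h2 : j ≤ n) :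
    IsTwoArc n (i, j) := ⟨h1, by omega, hj⟩

/-- Case A: vertex `n` is isolated. -/
lemma cardA (n b₁ b₂ : ℕ) (hn : 1 ≤ n) :
    ((selSet n b₁ b₂).filter fun A => ((n - 1, n) : ℕ × ℕ) ∉ A ∧ ((n - 2, n) : ℕ × ℕ) ∉ A).card
      = (selSet (n - 1) b₁ b₂).card := by
  apply Finset.card_nbij' id id
  · intro A hA
    obtain ⟨hA, h1, h2⟩ := Finset.mem_filter.mp hA
    obtain ⟨harc, hdisj, hc1, hc2⟩ := mem_selSet.mp hA
    refine mem_selSet.mpr ⟨?_, hdisj, hc1, hc2⟩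
    intro p hp
    refine arc_down (harc p hp) ?_
    obtain ⟨x, y⟩ := p
    obtain ⟨hb1, hb2, hb3, hb4⟩ := arc_bounds (harc _ hp)
    dsimp only at hb1 hb2 hb3 hb4 ⊢
    have hne1 : ¬(x = n - 1 ∧ y = n) := by
      rintro ⟨rfl, rfl⟩; exact h1 hp
    have hne2 : ¬(x = n - 2 ∧ y = n) := by
      rintro ⟨rfl, rfl⟩; exact h2 hp
    omega
  · intro B hB
    obtain ⟨harc, hdisj, hc1, hc2⟩ := mem_selSet.mp hB
    have hbnd : ∀ p ∈ B, 1 ≤ p.1 ∧ p.1 < p.2 ∧ p.2 ≤ n - 1 := snd_le ⟨harc, hdisj, hc1, hc2⟩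
    refine Finset.mem_filter.mpr ⟨mem_selSet.mpr
      ⟨fun p hp => arc_up (by omega) (harc p hp), hdisj, hc1, hc2⟩, ?_, ?_⟩
    · intro hmem; have := (hbnd _ hmem).2.2; dsimp only at this; omega
    · intro hmem; have := (hbnd _ hmem).2.2; dsimp only at this; omega
  · intro A _; rfl
  · intro B _; rfl

/-- Case B: the 1-arc `(n-1, n)` is selected. -/
lemma cardB (n b₁ b₂ : ℕ) (hn : 2 ≤ n) (hb : 1 ≤ b₁) :
    ((selSet n b₁ b₂).filter fun A => ((n - 1, n) : ℕ × ℕ) ∈ A).card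
      = (selSet (n - 2) (b₁ - 1) b₂).card := by
  apply Finset.card_nbij' (fun A => A.erase (n - 1, n)) (fun B => insert ((n - 1 : ℕ), n) B)
  · intro A hA
    obtain ⟨hA, hmem⟩ := Finset.mem_filter.mp hA
    obtain ⟨harc, hdisj, hc1, hc2⟩ := mem_selSet.mp hA
    refine mem_selSet.mpr ⟨?_, hdisj.mono (Finset.erase_subset _ _), ?_, ?_⟩
    · intro p hp
      have hp' : p ∈ A := Finset.mem_of_mem_erase hp
      have hne : p ≠ (n - 1, n) := Finset.ne_of_mem_erase hp
      obtain ⟨d1, d2, d3, d4⟩ := hdisj p hp' _ hmem hne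
      obtain ⟨x, y⟩ := p
      dsimp only at d1 d2 d3 d4
      obtain ⟨hb1, hb2, hb3, hb4⟩ := arc_bounds (harc _ hp')
      dsimp only at hb1 hb2 hb3 hb4
      exact arc_down (harc _ hp') (by dsimp only; omega)
    · rw [Finset.filter_erase, Finset.card_erase_of_mem, hc1]
      exact Finset.mem_filter.mpr ⟨hmem, show n = n - 1 + 1 by omega⟩
    · rw [Finset.filter_erase, Finset.erase_eq_of_notMem, hc2]
      intro h
      have := Finset.mem_filter.mp h
      dsimp only at this
      omega
  · intro B hB
    obtain ⟨harc, hdisj, hc1, hc2⟩ := mem_selSet.mp hB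
    have hbnd : ∀ p ∈ B, 1 ≤ p.1 ∧ p.1 < p.2 ∧ p.2 ≤ n - 2 := snd_le ⟨harc, hdisj, hc1, hc2⟩
    have hnm : ((n - 1 : ℕ), n) ∉ B := by
      intro h; have := (hbnd _ h).2.2; dsimp only at this; omega
    refine Finset.mem_filter.mpr ⟨mem_selSet.mpr ⟨?_, ?_, ?_, ?_⟩, Finset.mem_insert_self _ _⟩
    · intro p hp
      rcases Finset.mem_insert.mp hp with rfl | hp'
      · exact Or.inl (isOneArc_mk (by omega) (by omega) le_rfl)
      · exact arc_up (by omega) (harc p hp')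
    · refine arcsDisjoint_insert hdisj ?_
      intro p hp
      have := hbnd p hp
      dsimp only
      omega
    · rw [Finset.filter_insert, if_pos (show ((n - 1 : ℕ), n).2 = (n - 1, n).1 + 1 by
        dsimp only; omega), Finset.card_insert_of_notMem
        (fun h => hnm (Finset.mem_of_mem_filter _ h)), hc1]
      omega
    · rw [Finset.filter_insert, if_neg (show ¬ ((n - 1 : ℕ), n).2 = (n - 1, n).1 + 2 by
        dsimp only; omega), hc2]
  · intro A hA
    exact Finset.insert_erase (Finset.mem_filter.mp hA).2
  · intro B hB
    apply Finset.erase_insert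
    intro h
    have := (snd_le (mem_selSet.mp hB) _ h).2.2
    dsimp only at this; omega

end AuxLamSel2

section AuxLamSel3

open Finset
open scoped Classical

/-- Case C: `(n-2, n)` selected, `(n-3, n-1)` not. -/
lemma cardC (n b₁ b₂ : ℕ) (hn : 4 ≤ n) (hb : 1 ≤ b₂) :
    ((selSet n b₁ b₂).filter fun A => ((n - 1, n) : ℕ × ℕ) ∉ A ∧
        ((n - 2, n) : ℕ × ℕ) ∈ A ∧ ((n - 3, n - 1) : ℕ × ℕ) ∉ A).card
      = (selSet (n - 3) b₁ (b₂ - 1)).card := by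
  apply Finset.card_nbij' (fun A => A.erase (n - 2, n)) (fun B => insert ((n - 2 : ℕ), n) B)
  · intro A hA
    obtain ⟨hA, h1, hmem, h3⟩ := Finset.mem_filter.mp hA
    obtain ⟨harc, hdisj, hc1, hc2⟩ := mem_selSet.mp hA
    refine mem_selSet.mpr ⟨?_, hdisj.mono (Finset.erase_subset _ _), ?_, ?_⟩
    · intro p hp
      have hp' : p ∈ A := Finset.mem_of_mem_erase hp
      have hne : p ≠ (n - 2, n) := Finset.ne_of_mem_erase hp
      obtain ⟨d1, d2, d3, d4⟩ := hdisj p hp' _ hmem hne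
      obtain ⟨x, y⟩ := p
      dsimp only at d1 d2 d3 d4
      obtain ⟨hb1, hb2, hb3, hb4⟩ := arc_bounds (harc _ hp')
      dsimp only at hb1 hb2 hb3 hb4
      have hne3 : ¬(x = n - 3 ∧ y = n - 1) := by
        rintro ⟨rfl, rfl⟩; exact h3 hp'
      exact arc_down (harc _ hp') (by dsimp only; omega)
    · rw [Finset.filter_erase, Finset.erase_eq_of_notMem, hc1]
      intro h
      have := Finset.mem_filter.mp h
      dsimp only at this
      omega
    · rw [Finset.filter_erase, Finset.card_erase_of_mem, hc2]
      exact Finset.mem_filter.mpr ⟨hmem, show n = n - 2 + 2 by omega⟩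
  · intro B hB
    obtain ⟨harc, hdisj, hc1, hc2⟩ := mem_selSet.mp hB
    have hbnd : ∀ p ∈ B, 1 ≤ p.1 ∧ p.1 < p.2 ∧ p.2 ≤ n - 3 := snd_le ⟨harc, hdisj, hc1, hc2⟩
    have hnm : ((n - 2 : ℕ), n) ∉ B := by
      intro h; have := (hbnd _ h).2.2; dsimp only at this; omega
    refine Finset.mem_filter.mpr ⟨mem_selSet.mpr ⟨?_, ?_, ?_, ?_⟩, ?_,
      Finset.mem_insert_self _ _, ?_⟩
    · intro p hp
      rcases Finset.mem_insert.mp hp with rfl | hp'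
      · exact Or.inr (isTwoArc_mk (by omega) (by omega) le_rfl)
      · exact arc_up (by omega) (harc p hp')
    · refine arcsDisjoint_insert hdisj ?_
      intro p hp
      have := hbnd p hp
      dsimp only
      omega
    · rw [Finset.filter_insert, if_neg (show ¬ ((n - 2 : ℕ), n).2 = (n - 2, n).1 + 1 by
        dsimp only; omega), hc1]
    · rw [Finset.filter_insert, if_pos (show ((n - 2 : ℕ), n).2 = (n - 2, n).1 + 2 by
        dsimp only; omega), Finset.card_insert_of_notMem
        (fun h => hnm (Finset.mem_of_mem_filter _ h)), hc2]
      omega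
    · intro h
      rcases Finset.mem_insert.mp h with he | h'
      · rw [Prod.mk.injEq] at he; omega
      · have := (hbnd _ h').2.2; dsimp only at this; omega
    · intro h
      rcases Finset.mem_insert.mp h with he | h'
      · rw [Prod.mk.injEq] at he; omega
      · have := (hbnd _ h').2.2; dsimp only at this; omega
  · intro A hA
    exact Finset.insert_erase (Finset.mem_filter.mp hA).2.2.1
  · intro B hB
    apply Finset.erase_insert
    intro h
    have := (snd_le (mem_selSet.mp hB) _ h).2.2
    dsimp only at this; omega

/-- Case D: both `(n-2, n)` and `(n-3, n-1)` selected. -/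
lemma cardD (n b₁ b₂ : ℕ) (hn : 5 ≤ n) (hb : 2 ≤ b₂) :
    ((selSet n b₁ b₂).filter fun A => ((n - 1, n) : ℕ × ℕ) ∉ A ∧
        ((n - 2, n) : ℕ × ℕ) ∈ A ∧ ((n - 3, n - 1) : ℕ × ℕ) ∈ A).card
      = (selSet (n - 4) b₁ (b₂ - 2)).card := by
  have hne23 : ((n - 3 : ℕ), n - 1) ≠ ((n - 2 : ℕ), n) := by
    intro he; rw [Prod.mk.injEq] at he; omega
  apply Finset.card_nbij' (fun A => (A.erase (n - 2, n)).erase (n - 3, n - 1))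
    (fun B => insert ((n - 2 : ℕ), n) (insert ((n - 3 : ℕ), n - 1) B))
  · intro A hA
    obtain ⟨hA, h1, hmem2, hmem3⟩ := Finset.mem_filter.mp hA
    obtain ⟨harc, hdisj, hc1, hc2⟩ := mem_selSet.mp hA
    have hsub : (A.erase (n - 2, n)).erase (n - 3, n - 1) ⊆ A :=
      (Finset.erase_subset _ _).trans (Finset.erase_subset _ _)
    refine mem_selSet.mpr ⟨?_, hdisj.mono hsub, ?_, ?_⟩
    · intro p hp
      have hp' : p ∈ A := hsub hp
      have hne3 : p ≠ (n - 3, n - 1) := Finset.ne_of_mem_erase hp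
      have hne2 : p ≠ (n - 2, n) := Finset.ne_of_mem_erase (Finset.mem_of_mem_erase hp)
      obtain ⟨d1, d2, d3, d4⟩ := hdisj p hp' _ hmem2 hne2
      obtain ⟨e1, e2, e3, e4⟩ := hdisj p hp' _ hmem3 hne3
      obtain ⟨x, y⟩ := p
      dsimp only at d1 d2 d3 d4 e1 e2 e3 e4
      obtain ⟨hb1, hb2, hb3, hb4⟩ := arc_bounds (harc _ hp')
      dsimp only at hb1 hb2 hb3 hb4
      exact arc_down (harc _ hp') (by dsimp only; omega)
    · rw [Finset.filter_erase, Finset.filter_erase, Finset.erase_eq_of_notMem,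
        Finset.erase_eq_of_notMem, hc1]
      · intro h
        have := Finset.mem_filter.mp h
        dsimp only at this
        omega
      · intro h
        have := Finset.mem_filter.mp (Finset.mem_of_mem_erase h)
        dsimp only at this
        omega
    · rw [Finset.filter_erase, Finset.filter_erase, Finset.card_erase_of_mem,
        Finset.card_erase_of_mem, hc2]
      · omega
      · refine Finset.mem_filter.mpr ⟨hmem2, ?_⟩
        show n = n - 2 + 2
        omega
      · refine Finset.mem_erase.mpr ⟨hne23, Finset.mem_filter.mpr ⟨hmem3, ?_⟩⟩
        show n - 1 = n - 3 + 2
        omega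
  · intro B hB
    obtain ⟨harc, hdisj, hc1, hc2⟩ := mem_selSet.mp hB
    have hbnd : ∀ p ∈ B, 1 ≤ p.1 ∧ p.1 < p.2 ∧ p.2 ≤ n - 4 := snd_le ⟨harc, hdisj, hc1, hc2⟩
    have hnm2 : ((n - 2 : ℕ), n) ∉ B := by
      intro h; have := (hbnd _ h).2.2; dsimp only at this; omega
    have hnm3 : ((n - 3 : ℕ), n - 1) ∉ B := by
      intro h; have := (hbnd _ h).2.2; dsimp only at this; omega
    have hdisj3 : ArcsDisjoint (insert ((n - 3 : ℕ), n - 1) B) := by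
      refine arcsDisjoint_insert hdisj ?_
      intro p hp
      have := hbnd p hp
      dsimp only
      omega
    refine Finset.mem_filter.mpr ⟨mem_selSet.mpr ⟨?_, ?_, ?_, ?_⟩, ?_,
      Finset.mem_insert_self _ _, Finset.mem_insert_of_mem (Finset.mem_insert_self _ _)⟩
    · intro p hp
      rcases Finset.mem_insert.mp hp with rfl | hp'
      · exact Or.inr (isTwoArc_mk (by omega) (by omega) le_rfl)
      rcases Finset.mem_insert.mp hp' with rfl | hp''
      · exact Or.inr (isTwoArc_mk (by omega) (by omega) (by omega))
      · exact arc_up (by omega) (harc p hp'')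
    · refine arcsDisjoint_insert hdisj3 ?_
      intro p hp
      rcases Finset.mem_insert.mp hp with rfl | hp'
      · dsimp only; omega
      · have := hbnd p hp'
        dsimp only
        omega
    · rw [Finset.filter_insert, if_neg (show ¬ ((n - 2 : ℕ), n).2 = (n - 2, n).1 + 1 by
        dsimp only; omega), Finset.filter_insert,
        if_neg (show ¬ ((n - 3 : ℕ), n - 1).2 = (n - 3, n - 1).1 + 1 by dsimp only; omega), hc1]
    · rw [Finset.filter_insert, if_pos (show ((n - 2 : ℕ), n).2 = (n - 2, n).1 + 2 by
        dsimp only; omega), Finset.filter_insert,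
        if_pos (show ((n - 3 : ℕ), n - 1).2 = (n - 3, n - 1).1 + 2 by dsimp only; omega)]
      rw [Finset.card_insert_of_notMem, Finset.card_insert_of_notMem
        (fun h => hnm3 (Finset.mem_of_mem_filter _ h)), hc2]
      · omega
      · intro h
        rcases Finset.mem_insert.mp h with he | h'
        · exact hne23 he.symm
        · exact hnm2 (Finset.mem_of_mem_filter _ h')
    · intro h
      rcases Finset.mem_insert.mp h with he | h'
      · rw [Prod.mk.injEq] at he; omega
      rcases Finset.mem_insert.mp h' with he | h''
      · rw [Prod.mk.injEq] at he; omega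
      · have := (hbnd _ h'').2.2; dsimp only at this; omega
  · intro A hA
    obtain ⟨_, _, hmem2, hmem3⟩ := Finset.mem_filter.mp hA
    dsimp only
    rw [Finset.insert_erase (Finset.mem_erase.mpr ⟨hne23, hmem3⟩), Finset.insert_erase hmem2]
  · intro B hB
    have hbnd := snd_le (mem_selSet.mp hB)
    have hnm2 : ((n - 2 : ℕ), n) ∉ B := by
      intro h; have := (hbnd _ h).2.2; dsimp only at this; omega
    have hnm3 : ((n - 3 : ℕ), n - 1) ∉ B := by
      intro h; have := (hbnd _ h).2.2; dsimp only at this; omega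
    dsimp only
    rw [Finset.erase_insert, Finset.erase_insert hnm3]
    intro h
    rcases Finset.mem_insert.mp h with he | h'
    · exact hne23 he.symm
    · exact hnm2 h'

end AuxLamSel3

section AuxLamSel4

open Finset
open scoped Classical

lemma selSet_card_rec (n b₁ b₂ : ℕ) (hn : 5 ≤ n) (h1 : 1 ≤ b₁) (h2 : 2 ≤ b₂) :
    (selSet n b₁ b₂).card =
      (selSet (n - 2) (b₁ - 1) b₂).card + (selSet (n - 1) b₁ b₂).card +
        (selSet (n - 4) b₁ (b₂ - 2)).card + (selSet (n - 3) b₁ (b₂ - 1)).card := by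
  classical
  have e1 := Finset.card_filter_add_card_filter_not
    (s := selSet n b₁ b₂) (fun a => ((n - 1, n) : ℕ × ℕ) ∈ a)
  have e2 := Finset.card_filter_add_card_filter_not
    (s := (selSet n b₁ b₂).filter fun a => ¬ ((n - 1, n) : ℕ × ℕ) ∈ a)
    (fun a => ((n - 2, n) : ℕ × ℕ) ∈ a)
  have e3 := Finset.card_filter_add_card_filter_not
    (s := ((selSet n b₁ b₂).filter fun a => ¬ ((n - 1, n) : ℕ × ℕ) ∈ a).filter
      fun a => ((n - 2, n) : ℕ × ℕ) ∈ a)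
    (fun a => ((n - 3, n - 1) : ℕ × ℕ) ∈ a)
  have eB : ((selSet n b₁ b₂).filter fun a => ((n - 1, n) : ℕ × ℕ) ∈ a).card
      = (selSet (n - 2) (b₁ - 1) b₂).card := cardB n b₁ b₂ (by omega) h1
  have eA : (((selSet n b₁ b₂).filter fun a => ¬ ((n - 1, n) : ℕ × ℕ) ∈ a).filter
        fun a => ¬ ((n - 2, n) : ℕ × ℕ) ∈ a).card = (selSet (n - 1) b₁ b₂).card := by
    simp only [Finset.filter_filter]
    exact cardA n b₁ b₂ (by omega)
  have eD : ((((selSet n b₁ b₂).filter fun a => ¬ ((n - 1, n) : ℕ × ℕ) ∈ a).filter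
        fun a => ((n - 2, n) : ℕ × ℕ) ∈ a).filter
        fun a => ((n - 3, n - 1) : ℕ × ℕ) ∈ a).card = (selSet (n - 4) b₁ (b₂ - 2)).card := by
    simp only [Finset.filter_filter, and_assoc]
    exact cardD n b₁ b₂ (by omega) h2
  have eC : ((((selSet n b₁ b₂).filter fun a => ¬ ((n - 1, n) : ℕ × ℕ) ∈ a).filter
        fun a => ((n - 2, n) : ℕ × ℕ) ∈ a).filter
        fun a => ¬ ((n - 3, n - 1) : ℕ × ℕ) ∈ a).card = (selSet (n - 3) b₁ (b₂ - 1)).card := by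
    simp only [Finset.filter_filter, and_assoc]
    exact cardC n b₁ b₂ (by omega) (by omega)
  omega

lemma selSet_zero_zero (n : ℕ) : selSet n 0 0 = {∅} := by
  ext A
  rw [mem_selSet, Finset.mem_singleton]
  constructor
  · rintro ⟨harc, _, hc1, hc2⟩
    rw [Finset.card_eq_zero] at hc1 hc2
    rw [Finset.eq_empty_iff_forall_notMem]
    intro p hp
    obtain ⟨_, _, _, h4⟩ := arc_bounds (harc p hp)
    rcases h4 with h4 | h4
    · exact Finset.eq_empty_iff_forall_notMem.mp hc1 p (Finset.mem_filter.mpr ⟨hp, h4⟩)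
    · exact Finset.eq_empty_iff_forall_notMem.mp hc2 p (Finset.mem_filter.mpr ⟨hp, h4⟩)
  · rintro rfl
    exact ⟨fun p hp => absurd hp (Finset.notMem_empty p),
      fun p hp _ _ => absurd hp (Finset.notMem_empty p),
      by simp, by simp⟩

lemma selSet_small (n b₁ : ℕ) (hb : 1 ≤ b₁) (hn : n ≤ 1) : selSet n b₁ 0 = ∅ := by
  rw [Finset.eq_empty_iff_forall_notMem]
  intro A hA
  obtain ⟨harc, hdisj, hc1, hc2⟩ := mem_selSet.mp hA
  have hpos : 0 < (A.filter fun p => p.2 = p.1 + 1).card := by omega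
  obtain ⟨p, hp⟩ := Finset.card_pos.mp hpos
  obtain ⟨hpA, _⟩ := Finset.mem_filter.mp hp
  obtain ⟨hb1, hb2, hb3, _⟩ := arc_bounds (harc p hpA)
  omega

lemma selSet_card_rec2 (n b₁ : ℕ) (hn : 2 ≤ n) (hb : 1 ≤ b₁) :
    (selSet n b₁ 0).card = (selSet (n - 1) b₁ 0).card + (selSet (n - 2) (b₁ - 1) 0).card := by
  classical
  have e1 := Finset.card_filter_add_card_filter_not
    (s := selSet n b₁ 0) (fun a => ((n - 1, n) : ℕ × ℕ) ∈ a)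
  have hno2 : ∀ A ∈ selSet n b₁ 0, ((n - 2, n) : ℕ × ℕ) ∉ A := by
    intro A hA hmem
    obtain ⟨harc, hdisj, hc1, hc2⟩ := mem_selSet.mp hA
    rw [Finset.card_eq_zero, Finset.eq_empty_iff_forall_notMem] at hc2
    exact hc2 _ (Finset.mem_filter.mpr ⟨hmem, show n = n - 2 + 2 by omega⟩)
  have c1 : ((selSet n b₁ 0).filter fun a => ¬ ((n - 1, n) : ℕ × ℕ) ∈ a)
      = (selSet n b₁ 0).filter fun a =>
          ¬ ((n - 1, n) : ℕ × ℕ) ∈ a ∧ ¬ ((n - 2, n) : ℕ × ℕ) ∈ a :=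
    Finset.filter_congr fun A hA => by have := hno2 A hA; tauto
  rw [c1] at e1
  have eA : ((selSet n b₁ 0).filter fun a =>
        ¬ ((n - 1, n) : ℕ × ℕ) ∈ a ∧ ¬ ((n - 2, n) : ℕ × ℕ) ∈ a).card
      = (selSet (n - 1) b₁ 0).card := cardA n b₁ 0 (by omega)
  have eB : ((selSet n b₁ 0).filter fun a => ((n - 1, n) : ℕ × ℕ) ∈ a).card
      = (selSet (n - 2) (b₁ - 1) 0).card := cardB n b₁ 0 (by omega) hb
  omega

lemma selSet_card_choose (n : ℕ) : ∀ b₁ : ℕ, (selSet n b₁ 0).card = (n - b₁).choose b₁ := by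
  induction n using Nat.strong_induction_on with
  | _ n ih =>
    intro b₁
    rcases Nat.eq_zero_or_pos b₁ with rfl | hb
    · rw [selSet_zero_zero]
      simp
    rcases le_or_gt n 1 with hn | hn
    · rw [selSet_small n b₁ hb hn, Finset.card_empty,
        Nat.choose_eq_zero_of_lt (by omega)]
    rcases le_or_gt (b₁ + 1) n with hbn | hbn
    · obtain ⟨k, rfl⟩ : ∃ k, b₁ = k + 1 := ⟨b₁ - 1, by omega⟩
      rw [selSet_card_rec2 n (k + 1) (by omega) hb, ih (n - 1) (by omega) (k + 1),
        ih (n - 2) (by omega) (k + 1 - 1)]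
      have hk : k + 1 - 1 = k := by omega
      have h1 : n - (k + 1) = n - 2 - k + 1 := by omega
      have h2 : n - 1 - (k + 1) = n - 2 - k := by omega
      rw [hk, h1, h2, Nat.choose_succ_succ']
      omega
    · rw [selSet_card_rec2 n b₁ (by omega) hb, ih (n - 1) (by omega) b₁,
        ih (n - 2) (by omega) (b₁ - 1),
        Nat.choose_eq_zero_of_lt (show n - 1 - b₁ < b₁ by omega),
        Nat.choose_eq_zero_of_lt (show n - 2 - (b₁ - 1) < b₁ - 1 by omega),
        Nat.choose_eq_zero_of_lt (show n - b₁ < b₁ by omega)]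

end AuxLamSel4

/-- `λ(n,b₁,b₂)` satisfies the recursion
`λ(n,b₁,b₂) = λ(n-2,b₁-1,b₂) + λ(n-1,b₁,b₂) + λ(n-4,b₁,b₂-2) + λ(n-3,b₁,b₂-1)`
for `n ≥ 5`, `b₁ ≥ 1`, `b₂ ≥ 2`, with initial conditions `λ(n,0,0) = 1` and
`λ(n,b₁,0) = C(n-b₁,b₁)`. -/

theorem lamSel_recursion :
    (∀ n b₁ b₂ : ℕ, 5 ≤ n → 1 ≤ b₁ → 2 ≤ b₂ →
      lamSel n b₁ b₂ =
        lamSel (n - 2) (b₁ - 1) b₂ + lamSel (n - 1) b₁ b₂ +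
          lamSel (n - 4) b₁ (b₂ - 2) + lamSel (n - 3) b₁ (b₂ - 1)) ∧
    (∀ n : ℕ, lamSel n 0 0 = 1) ∧
    (∀ n b₁ : ℕ, lamSel n b₁ 0 = (n - b₁).choose b₁) := by
  refine ⟨?_, ?_, ?_⟩
  · intro n b₁ b₂ hn h1 h2
    rw [lamSel_eq, lamSel_eq, lamSel_eq, lamSel_eq, lamSel_eq]
    exact selSet_card_rec n b₁ b₂ hn h1 h2
  · intro n
    rw [lamSel_eq, selSet_zero_zero]
    simp
  · intro n b₁
    rw [lamSel_eq]
    exact selSet_card_choose n b₁
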